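/- Let v₁ = (0,0,0), v₂ = (1000,0,0), v₃ = (291,706,0), v₄ = (1046,460,609), v₅ = (804,450,−361), v₆ = (114,519,359), v₇ = (1097,475,180), v₈ = (223,261,−257), v₉ = (867,−122,405), v₁₀ = (771,539,−339) in ℝ³, and define edge vectors eᵢ = v_{i+1} − vᵢ for i = 1, …, 9 and e₁₀ = v₁ − v₁₀. Then there is no w ∈ ℝ³ such that (−1)^{i+1} (w · eᵢ) > 0 for every i ∈ {1, …, 10}. -/

import Mathlib

/-- The vertices of the paper's 10-stick polygonal realization of the knot `9_16`.
Here `vert9_16 i` is the paper's vertex `v_(i+1)`. -/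
noncomputable def vert9_16 : Fin 10 → (Fin 3 → ℝ) :=
  ![![0, 0, 0], ![1000, 0, 0], ![291, 706, 0], ![1046, 460, 609], ![804, 450, -361], ![114, 519, 359], ![1097, 475, 180], ![223, 261, -257], ![867, -122, 405], ![771, 539, -339]]

/-- The edge vectors `eᵢ = v_(i+1) − vᵢ` (cyclically, so `e₁₀ = v₁ − v₁₀`);
here `edge9_16 i` is the paper's `e_(i+1)`, using wrap-around addition on `Fin 10`. -/
noncomputable def edge9_16 (i : Fin 10) : Fin 3 → ℝ :=
  vert9_16 (i + 1) - vert9_16 i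

/-- There is no `w ∈ ℝ³` such that `(−1)^(i+1) (w · eᵢ) > 0` for every
`i ∈ {1, …, 10}`: no projection of this polygon (the knot `9_16`) to a line has
5 local maxima. (With 0-based indexing `i : Fin 10`, the sign is `(−1)^i`.) -/
theorem no_alternating_direction_9_16 :
    ¬ ∃ w : Fin 3 → ℝ, ∀ i : Fin 10,
        0 < (-1 : ℝ) ^ (i : ℕ) * ∑ j : Fin 3, w j * edge9_16 i j := by
  rintro ⟨w, h⟩
  have h0 := h 0
  have h1 := h 1
  have h3 := h 3
  have h7 := h 7
  have e0 : edge9_16 0 = ![1000, 0, 0] - ![0, 0, 0] := by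
    rw [edge9_16]; rfl
  have e1 : edge9_16 1 = ![291, 706, 0] - ![1000, 0, 0] := by
    rw [edge9_16]; rfl
  have e3 : edge9_16 3 = ![804, 450, -361] - ![1046, 460, 609] := by
    rw [edge9_16]; rfl
  have e7 : edge9_16 7 = ![867, -122, 405] - ![223, 261, -257] := by
    rw [edge9_16]; rfl
  rw [e0] at h0; rw [e1] at h1; rw [e3] at h3; rw [e7] at h7
  norm_num [Fin.sum_univ_three, Matrix.cons_val_two, Matrix.tail_cons, Matrix.head_cons, show ((3:Fin 10):ℕ) = 3 from rfl,
    show ((7:Fin 10):ℕ) = 7 from rfl] at h0 h1 h3 h7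
  linarith [h0, h1, h3, h7]
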